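/- For all n ≥ 0, L^{(k)}_{n+k}(x,s) = F^{(k)}_{n+k}(x,s) + (k-1)·s·F^{(k)}_n(x,s). -/

import Mathlib

/-- Generalized Fibonacci polynomials. -/
noncomputable def genFib (k n : ℕ) (x s : ℝ) : ℝ :=
  ∑ j ∈ Finset.range (n / k + 1),
    (Nat.choose (n - (k - 1) * j) j : ℝ) * s ^ j * x ^ (n - k * j)

/-- Generalized Lucas polynomials. -/
noncomputable def genLucas (k n : ℕ) (x s : ℝ) : ℝ :=
  if n = 0 then (k : ℝ)
  else ∑ j ∈ Finset.range (n / k + 1),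
    ((n : ℝ) / ((n - (k - 1) * j : ℕ) : ℝ)) *
      (Nat.choose (n - (k - 1) * j) j : ℝ) * s ^ j * x ^ (n - k * j)

theorem genLucas_eq_genFib_add (k : ℕ) (hk : 1 ≤ k) (x s : ℝ) (n : ℕ) :
    genLucas k (n + k) x s =
      genFib k (n + k) x s + ((k : ℝ) - 1) * s * genFib k n x s := by
  have hk0 : 0 < k := hk
  have hm : ¬ (n + k = 0) := by omega
  unfold genLucas genFib
  rw [if_neg hm, Nat.add_div_right n hk0]
  set B : ℕ → ℝ := fun j => if j = 0 then 0 else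
    ((k : ℝ) - 1) * (Nat.choose (n + k - (k-1)*j - 1) (j-1) : ℝ) * s ^ j * x ^ (n + k - k*j)
    with hB
  have hsum1 : ∑ j ∈ Finset.range (n / k + 1 + 1),
      ((n + k : ℕ) : ℝ) / ((n + k - (k-1)*j : ℕ) : ℝ) *
        (Nat.choose (n + k - (k-1)*j) j : ℝ) * s ^ j * x ^ (n + k - k*j)
      = ∑ j ∈ Finset.range (n / k + 1 + 1),
        ((Nat.choose (n + k - (k-1)*j) j : ℝ) * s ^ j * x ^ (n + k - k*j) + B j) := by
    apply Finset.sum_congr rfl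
    intro j hj
    simp only [Finset.mem_range] at hj
    have hjle : j ≤ (n + k) / k := by
      rw [Nat.add_div_right n hk0]; omega
    have hkj : k * j ≤ n + k := by
      rw [mul_comm]; exact (Nat.le_div_iff_mul_le hk0).mp hjle
    rcases Nat.eq_zero_or_pos j with hj0 | hj1
    · subst hj0
      have : ((n + k - (k-1)*0 : ℕ) : ℝ) = ((n+k : ℕ) : ℝ) := by norm_num
      simp only [hB, if_pos rfl, this, add_zero]
      rw [div_self (by exact_mod_cast hm)]
      ring
    · -- j ≥ 1
      set a := n + k - (k-1)*j with ha
      have hkk : (k-1)*j + j = k*j := by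
        have : (k-1)*j + 1*j = k*j := by rw [← Nat.add_mul]; congr 1; omega
        simpa using this
      have ha1 : 1 ≤ a := by omega
      have hmeq : n + k = a + (k-1)*j := by omega
      have hnat : (j : ℝ) * (Nat.choose a j : ℝ) = (a : ℝ) * (Nat.choose (a-1) (j-1) : ℝ) := by
        obtain ⟨b, hb⟩ : ∃ b, a = b + 1 := ⟨a - 1, by omega⟩
        obtain ⟨i, hi⟩ : ∃ i, j = i + 1 := ⟨j - 1, by omega⟩
        rw [hb, hi]
        simp only [Nat.add_sub_cancel]
        have h2 : (i+1) * Nat.choose (b+1) (i+1) = (b+1) * Nat.choose b i := by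
          simpa [Nat.succ_eq_add_one, mul_comm] using (Nat.add_one_mul_choose_eq b i).symm
        exact_mod_cast h2
      have haR : ((a : ℕ) : ℝ) ≠ 0 := by exact_mod_cast (by omega : a ≠ 0)
      have hcast : ((n + k : ℕ) : ℝ) = (a : ℝ) + ((k:ℝ) - 1) * (j : ℝ) := by
        have hc : ((k - 1 : ℕ) : ℝ) = (k : ℝ) - 1 := by
          rw [Nat.cast_sub hk]; simp
        rw [hmeq, Nat.cast_add, Nat.cast_mul, hc]
      have hBj : B j = ((k : ℝ) - 1) * (Nat.choose (a-1) (j-1) : ℝ) * s ^ j * x ^ (n + k - k*j) := by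
        simp only [hB]
        rw [if_neg (by omega : j ≠ 0)]
      rw [hBj]
      have key : ((n + k : ℕ) : ℝ) / (a : ℝ) * (Nat.choose a j : ℝ)
          = (Nat.choose a j : ℝ) + ((k:ℝ) - 1) * (Nat.choose (a-1) (j-1) : ℝ) := by
        rw [hcast]
        field_simp
        nlinarith [hnat]
      calc ((n + k : ℕ) : ℝ) / (a : ℝ) * (Nat.choose a j : ℝ) * s ^ j * x ^ (n + k - k*j)
          = (((n + k : ℕ) : ℝ) / (a : ℝ) * (Nat.choose a j : ℝ)) * s ^ j * x ^ (n + k - k*j) := by ring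
        _ = ((Nat.choose a j : ℝ) + ((k:ℝ) - 1) * (Nat.choose (a-1) (j-1) : ℝ)) * s ^ j * x ^ (n + k - k*j) := by rw [key]
        _ = _ := by ring
  rw [hsum1, Finset.sum_add_distrib]
  congr 1
  rw [Finset.sum_range_succ']
  have hB0 : B 0 = 0 := by simp [hB]
  rw [hB0, add_zero, Finset.mul_sum]
  apply Finset.sum_congr rfl
  intro i hi
  simp only [Finset.mem_range] at hi
  have hki : k * i ≤ n := by
    rw [mul_comm]; exact (Nat.le_div_iff_mul_le hk0).mp (by omega)
  have hkk : (k-1)*i + i = k*i := by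
    have : (k-1)*i + 1*i = k*i := by rw [← Nat.add_mul]; congr 1; omega
    simpa using this
  have hBi : B (i+1) = ((k : ℝ) - 1) * (Nat.choose (n + k - (k-1)*(i+1) - 1) i : ℝ) * s ^ (i+1) * x ^ (n + k - k*(i+1)) := by
    simp [hB]
  rw [hBi]
  have h1 : n + k - (k-1)*(i+1) - 1 = n - (k-1)*i := by
    have : (k-1)*(i+1) = (k-1)*i + (k-1) := by ring
    omega
  have h2 : n + k - k*(i+1) = n - k*i := by
    have : k*(i+1) = k*i + k := by ring
    omega
  rw [h1, h2, pow_succ]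
  ring
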